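/- For any function h : ℤ≥0 → ℤ≥0 of the form h(j) = a*j^2 + b*j + e with integers a > 0, e > 0, and arbitrary integer b, we have hdepth(h) ≤ 13. -/

import Mathlib

/-- The alternating binomial sum appearing in the definition of hdepth. -/
def hdS (h : ℕ → ℤ) (d k : ℕ) : ℤ :=
  ∑ j ∈ Finset.range (k + 1), (-1 : ℤ) ^ (k - j) * (Nat.choose (d - j) (k - j)) * h j

lemma hdS_zero (h : ℕ → ℤ) (d : ℕ) : hdS h d 0 = h 0 := by
  simp [hdS]

lemma hdS_pascal (h : ℕ → ℤ) (d k : ℕ) (hk : k + 1 ≤ d) :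
    hdS h (d + 1) (k + 1) = hdS h d (k + 1) - hdS h d k := by
  unfold hdS
  rw [Finset.sum_range_succ (n := k + 1), Finset.sum_range_succ (n := k + 1)]
  have hsplit : ∀ j ∈ Finset.range (k + 1),
      (-1 : ℤ) ^ (k + 1 - j) * (Nat.choose (d + 1 - j) (k + 1 - j)) * h j
      = (-1 : ℤ) ^ (k + 1 - j) * (Nat.choose (d - j) (k + 1 - j)) * h j
        - (-1 : ℤ) ^ (k - j) * (Nat.choose (d - j) (k - j)) * h j := by
    intro j hj
    have hj' : j ≤ k := Nat.lt_succ_iff.mp (Finset.mem_range.mp hj)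
    have h1 : d + 1 - j = (d - j) + 1 := by omega
    have h2 : k + 1 - j = (k - j) + 1 := by omega
    rw [h1, h2, Nat.choose_succ_succ]
    push_cast
    rw [pow_succ]
    ring
  rw [Finset.sum_congr rfl hsplit, Finset.sum_sub_distrib]
  have e1 : d + 1 - (k + 1) = d - (k + 1) + 1 := by omega
  simp [e1]
  ring

lemma hdS_descent (h : ℕ → ℤ) (d : ℕ) (hd : ∀ k ≤ d + 1, 0 ≤ hdS h (d + 1) k) :
    ∀ k ≤ d, 0 ≤ hdS h d k := by
  intro k hk
  induction k with
  | zero =>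
      have := hd 0 (by omega)
      rwa [hdS_zero] at *
  | succ n ih =>
      have h1 : hdS h (d + 1) (n + 1) = hdS h d (n + 1) - hdS h d n :=
        hdS_pascal h d n hk
      have h2 := hd (n + 1) (by omega)
      have h3 := ih (by omega)
      omega

theorem stmt_13 (a b e : ℤ) (ha : 0 < a) (he : 0 < e)
    (h : ℕ → ℤ) (hh : ∀ j : ℕ, h j = a * j ^ 2 + b * j + e)
    (hnn : ∀ j : ℕ, 0 ≤ h j) :
    ∀ d : ℕ, 14 ≤ d → ∃ k : ℕ, k ≤ d ∧
      (∑ j ∈ Finset.range (k + 1), (-1 : ℤ) ^ (k - j) * (Nat.choose (d - j) (k - j)) * h j) < 0 := by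
  have base : ∃ k : ℕ, k ≤ 14 ∧ hdS h 14 k < 0 := by
    have hS1 : hdS h 14 1 = a + b - 13 * e := by
      simp [hdS, Finset.sum_range_succ, hh, Nat.choose]; push_cast; ring
    have hS2 : hdS h 14 2 = -9 * a - 11 * b + 79 * e := by
      simp [hdS, Finset.sum_range_succ, hh, Nat.choose]; push_cast; ring
    have hS3 : hdS h 14 3 = 39 * a + 57 * b - 297 * e := by
      simp [hdS, Finset.sum_range_succ, hh, Nat.choose]; push_cast; ring
    by_contra hc
    push_neg at hc
    have h1 := hc 1 (by omega)
    have h2 := hc 2 (by omega)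
    have h3 := hc 3 (by omega)
    rw [hS1] at h1; rw [hS2] at h2; rw [hS3] at h3
    -- 20*S1 + 7*S2 + S3 = -4a - 4e
    linarith
  have main : ∀ d : ℕ, 14 ≤ d → ∃ k : ℕ, k ≤ d ∧ hdS h d k < 0 := by
    intro d hd
    induction d with
    | zero => omega
    | succ n ih =>
        rcases Nat.lt_or_ge n 14 with hn | hn
        · have : n + 1 = 14 := by omega
          rw [this]; exact base
        · by_contra hc
          push_neg at hc
          have hdesc := hdS_descent h n hc
          obtain ⟨k, hk, hklt⟩ := ih hn
          exact absurd (hdesc k hk) (not_le.mpr hklt)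
  intro d hd
  obtain ⟨k, hk, hklt⟩ := main d hd
  exact ⟨k, hk, hklt⟩
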